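/- Let t₁, t₂, t₃, u₁, u₂, u₃, v₁, v₂, v₃ be monic polynomials in ℂ[x] and M ≥ M₀ where M₀ is large enough that no non-trivial vanishing sum of at most 6 M-th powers of polynomials (no term a scalar multiple of another) exists. If the 3×3 determinant det[[t₁^M, t₂^M, t₃^M],[u₁^M, u₂^M, u₃^M],[v₁^M, v₂^M, v₃^M]] = 0, then the six products appearing in the determinant expansion must pair off: there is a pairing of the three positive terms with the three negative terms in which paired products of M-th powers are equal. -/

import Mathlib

open Polynomial

set_option maxHeartbeats 1000000

private lemma count_sum_eq (A : Multiset ℂ[X]) :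
    ∑ v ∈ A.toFinset, A.count v • v = A.sum := by
  conv_rhs => rw [← Multiset.toFinset_sum_count_nsmul_eq A]
  rw [Multiset.sum_sum]
  simp [Multiset.nsmul_singleton, Multiset.sum_replicate]

private lemma pair_eq {α : Type*} {a₂ a₃ x y : α}
    (h : ({a₂, a₃} : Multiset α) = {x, y}) :
    (a₂ = x ∧ a₃ = y) ∨ (a₂ = y ∧ a₃ = x) := by
  have h2 : a₂ ∈ ({x, y} : Multiset α) := h ▸ (by simp)
  simp only [Multiset.insert_eq_cons, Multiset.mem_cons, Multiset.mem_singleton] at h2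
  rcases h2 with rfl | rfl
  · left
    refine ⟨rfl, ?_⟩
    have := (Multiset.cons_inj_right a₂).mp h
    exact Multiset.singleton_inj.mp this
  · right
    refine ⟨rfl, ?_⟩
    rw [show ({x, a₂} : Multiset α) = {a₂, x} from Multiset.cons_swap _ _ _] at h
    have := (Multiset.cons_inj_right a₂).mp h
    exact Multiset.singleton_inj.mp this

private lemma reorder3a {α : Type*} (x y z : α) :
    ({x, y, z} : Multiset α) = {y, x, z} := Multiset.cons_swap _ _ _

private lemma reorder3b {α : Type*} (x y z : α) :
    ({x, y, z} : Multiset α) = {z, x, y} := by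
  simp only [Multiset.insert_eq_cons, ← Multiset.cons_zero]
  rw [Multiset.cons_swap y z, Multiset.cons_swap x z]

private lemma perm_of_multiset_eq {a₁ a₂ a₃ b₁ b₂ b₃ : ℂ[X]}
    (h : ({a₁, a₂, a₃} : Multiset ℂ[X]) = {b₁, b₂, b₃}) :
    ∃ σ : Equiv.Perm (Fin 3), ∀ i : Fin 3,
      (![a₁, a₂, a₃]) i = (![b₁, b₂, b₃]) (σ i) := by
  have h1 : a₁ ∈ ({b₁, b₂, b₃} : Multiset ℂ[X]) := h ▸ (by simp)
  simp only [Multiset.insert_eq_cons, Multiset.mem_cons, Multiset.mem_singleton] at h1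
  rcases h1 with rfl | rfl | rfl
  · have h' : ({a₂, a₃} : Multiset ℂ[X]) = {b₂, b₃} :=
      (Multiset.cons_inj_right a₁).mp h
    rcases pair_eq h' with ⟨rfl, rfl⟩ | ⟨rfl, rfl⟩
    · exact ⟨1, by intro i; fin_cases i <;> rfl⟩
    · exact ⟨Equiv.swap 1 2, by intro i; fin_cases i <;> simp [Equiv.swap_apply_def]⟩
  · rw [reorder3a b₁ a₁ b₃] at h
    have h' : ({a₂, a₃} : Multiset ℂ[X]) = {b₁, b₃} :=
      (Multiset.cons_inj_right a₁).mp h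
    rcases pair_eq h' with ⟨rfl, rfl⟩ | ⟨rfl, rfl⟩
    · exact ⟨Equiv.swap 0 1, by intro i; fin_cases i <;> simp [Equiv.swap_apply_def]⟩
    · refine ⟨⟨![1, 2, 0], ![2, 0, 1], by decide, by decide⟩, ?_⟩
      intro i; fin_cases i <;> rfl
  · rw [reorder3b b₁ b₂ a₁] at h
    have h' : ({a₂, a₃} : Multiset ℂ[X]) = {b₁, b₂} :=
      (Multiset.cons_inj_right a₁).mp h
    rcases pair_eq h' with ⟨rfl, rfl⟩ | ⟨rfl, rfl⟩
    · refine ⟨⟨![2, 0, 1], ![1, 2, 0], by decide, by decide⟩, ?_⟩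
      intro i; fin_cases i <;> rfl
    · exact ⟨Equiv.swap 0 2, by intro i; fin_cases i <;> simp [Equiv.swap_apply_def]⟩

private lemma key_lemma (M : ℕ) (hM1 : 0 < M)
    (hM : ∀ j : ℕ, 2 ≤ j → j ≤ 6 →
      ¬ ∃ g : Fin j → ℂ[X], (∀ i, g i ≠ 0) ∧
        (∀ i i', i ≠ i' → ∀ c : ℂ, g i ≠ c • g i') ∧
        ∑ i, g i ^ M = 0)
    (S : Finset ℂ[X]) (hS6 : S.card ≤ 6)
    (hmon : ∀ v ∈ S, ∃ m : ℂ[X], m.Monic ∧ v = m ^ M)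
    (c : ℂ[X] → ℂ) (hc : ∀ v ∈ S, c v ≠ 0)
    (hsum : ∑ v ∈ S, c v • v = 0) : S = ∅ := by
  by_contra hne
  have hk1 : 1 ≤ S.card := Finset.card_pos.mpr (Finset.nonempty_of_ne_empty hne)
  -- choose data on the subtype
  have hmem : ∀ x : S, (x : ℂ[X]) ∈ S := fun x => x.2
  choose m hmmon hmeq using fun x : S => hmon x (hmem x)
  choose γ hγ using fun x : S => IsAlgClosed.exists_pow_nat_eq (c (x : ℂ[X])) hM1
  have hγne : ∀ x : S, γ x ≠ 0 := by
    intro x hx0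
    apply hc (x : ℂ[X]) (hmem x)
    rw [← hγ x, hx0, zero_pow hM1.ne']
  set k := S.card with hk
  rcases eq_or_lt_of_le hk1 with h1 | h2
  · -- k = 1
    obtain ⟨x, hx⟩ := Finset.card_eq_one.mp h1.symm
    rw [hx, Finset.sum_singleton] at hsum
    obtain ⟨mm, hmm, rfl⟩ := hmon x (by simp [hx])
    exact (smul_ne_zero (hc _ (by simp [hx])) (pow_ne_zero _ hmm.ne_zero)) hsum
  · -- 2 ≤ k
    apply hM k h2 hS6
    set e : Fin k → S := ⇑S.equivFin.symm with he
    refine ⟨fun i => γ (e i) • m (e i), ?_, ?_, ?_⟩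
    · intro i
      exact smul_ne_zero (hγne _) (hmmon _).ne_zero
    · intro i i' hii' d hcon
      have hne' : e i ≠ e i' := fun hh => hii' (S.equivFin.symm.injective hh)
      have hvne : ((e i : ℂ[X])) ≠ ((e i' : ℂ[X])) := fun hh => hne' (Subtype.ext hh)
      replace hcon : γ (e i) • m (e i) = d • (γ (e i') • m (e i')) := hcon
      have hpow : (γ (e i) • m (e i)) ^ M = (d • (γ (e i') • m (e i'))) ^ M := by rw [hcon]
      rw [_root_.smul_pow, _root_.smul_pow, _root_.smul_pow, hγ, ← hmeq, smul_smul, hγ,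
        ← hmeq] at hpow
      -- hpow : c (e i) • (e i) = (d^M * c (e i')) • (e i')
      have hmon1 : ((e i : ℂ[X])).Monic := by
        rw [hmeq (e i)]; exact (hmmon (e i)).pow M
      have hmon2 : ((e i' : ℂ[X])).Monic := by
        rw [hmeq (e i')]; exact (hmmon (e i')).pow M
      have hlc := congrArg leadingCoeff hpow
      rw [smul_eq_C_mul, smul_eq_C_mul, leadingCoeff_mul, leadingCoeff_mul,
        leadingCoeff_C, leadingCoeff_C, hmon1.leadingCoeff, hmon2.leadingCoeff,
        mul_one, mul_one] at hlc
      rw [← hlc] at hpow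
      have := smul_right_injective ℂ[X] (hc _ (hmem (e i))) hpow
      exact hvne this
    · have : ∑ i : Fin k, (γ (e i) • m (e i)) ^ M = ∑ v ∈ S, c v • v := by
        rw [← Finset.sum_coe_sort S (fun v => c v • v)]
        rw [← Equiv.sum_comp S.equivFin.symm (fun x : S => c (x : ℂ[X]) • (x : ℂ[X]))]
        apply Finset.sum_congr rfl
        intro i _
        rw [_root_.smul_pow, hγ (e i), ← hmeq (e i)]
      rw [this, hsum]

private lemma multiset_eq_of_sum_eq (M : ℕ) (hM1 : 0 < M)
    (hM : ∀ j : ℕ, 2 ≤ j → j ≤ 6 →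
      ¬ ∃ g : Fin j → ℂ[X], (∀ i, g i ≠ 0) ∧
        (∀ i i', i ≠ i' → ∀ c : ℂ, g i ≠ c • g i') ∧
        ∑ i, g i ^ M = 0)
    (a₁ a₂ a₃ b₁ b₂ b₃ : ℂ[X])
    (ha₁ : ∃ m : ℂ[X], m.Monic ∧ a₁ = m ^ M)
    (ha₂ : ∃ m : ℂ[X], m.Monic ∧ a₂ = m ^ M)
    (ha₃ : ∃ m : ℂ[X], m.Monic ∧ a₃ = m ^ M)
    (hb₁ : ∃ m : ℂ[X], m.Monic ∧ b₁ = m ^ M)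
    (hb₂ : ∃ m : ℂ[X], m.Monic ∧ b₂ = m ^ M)
    (hb₃ : ∃ m : ℂ[X], m.Monic ∧ b₃ = m ^ M)
    (hsum : a₁ + a₂ + a₃ = b₁ + b₂ + b₃) :
    ({a₁, a₂, a₃} : Multiset ℂ[X]) = {b₁, b₂, b₃} := by
  classical
  set A : Multiset ℂ[X] := {a₁, a₂, a₃} with hA
  set B : Multiset ℂ[X] := {b₁, b₂, b₃} with hB
  set T : Finset ℂ[X] := (A + B).toFinset with hT
  set c : ℂ[X] → ℂ := fun v => (A.count v : ℂ) - (B.count v : ℂ) with hcdef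
  set S : Finset ℂ[X] := T.filter (fun v => c v ≠ 0) with hSdef
  have hsubA : A.toFinset ⊆ T := by
    intro x hx; rw [hT, Multiset.mem_toFinset]; rw [Multiset.mem_toFinset] at hx
    exact Multiset.mem_add.mpr (Or.inl hx)
  have hsubB : B.toFinset ⊆ T := by
    intro x hx; rw [hT, Multiset.mem_toFinset]; rw [Multiset.mem_toFinset] at hx
    exact Multiset.mem_add.mpr (Or.inr hx)
  have hsumA : ∑ v ∈ T, (A.count v : ℂ) • v = A.sum := by
    rw [← count_sum_eq A]
    rw [← Finset.sum_subset hsubA (by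
      intro x _ hx
      rw [Multiset.count_eq_zero_of_notMem (by simpa using hx)]
      simp)]
    apply Finset.sum_congr rfl
    intro x _
    rw [Nat.cast_smul_eq_nsmul]
  have hsumB : ∑ v ∈ T, (B.count v : ℂ) • v = B.sum := by
    rw [← count_sum_eq B]
    rw [← Finset.sum_subset hsubB (by
      intro x _ hx
      rw [Multiset.count_eq_zero_of_notMem (by simpa using hx)]
      simp)]
    apply Finset.sum_congr rfl
    intro x _
    rw [Nat.cast_smul_eq_nsmul]
  have hzero : ∑ v ∈ S, c v • v = 0 := by
    rw [hSdef, Finset.sum_filter_of_ne (by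
      intro x _ hx hcx
      exact hx (by rw [hcx, zero_smul]))]
    have : ∑ v ∈ T, c v • v = A.sum - B.sum := by
      rw [← hsumA, ← hsumB, ← Finset.sum_sub_distrib]
      apply Finset.sum_congr rfl
      intro x _
      rw [hcdef, sub_smul]
    rw [this, hA, hB]
    simp only [Multiset.insert_eq_cons, Multiset.sum_cons, Multiset.sum_singleton]
    rw [sub_eq_zero, ← add_assoc, ← add_assoc]
    exact hsum
  have hcard : S.card ≤ 6 := by
    refine le_trans (Finset.card_filter_le _ _) (le_trans (Multiset.toFinset_card_le _) ?_)
    rw [le_iff_eq_or_lt]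
    left
    simp [hA, hB]
  have hmon' : ∀ v ∈ S, ∃ m : ℂ[X], m.Monic ∧ v = m ^ M := by
    intro v hv
    have hvT : v ∈ T := Finset.mem_of_mem_filter v hv
    rw [hT, Multiset.mem_toFinset, Multiset.mem_add] at hvT
    have : v = a₁ ∨ v = a₂ ∨ v = a₃ ∨ v = b₁ ∨ v = b₂ ∨ v = b₃ := by
      rcases hvT with hvA | hvB
      · rw [hA] at hvA
        simp only [Multiset.insert_eq_cons, Multiset.mem_cons, Multiset.mem_singleton] at hvA
        rcases hvA with h | h | h
        exacts [Or.inl h, Or.inr (Or.inl h), Or.inr (Or.inr (Or.inl h))]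
      · rw [hB] at hvB
        simp only [Multiset.insert_eq_cons, Multiset.mem_cons, Multiset.mem_singleton] at hvB
        rcases hvB with h | h | h
        exacts [Or.inr (Or.inr (Or.inr (Or.inl h))),
          Or.inr (Or.inr (Or.inr (Or.inr (Or.inl h)))),
          Or.inr (Or.inr (Or.inr (Or.inr (Or.inr h))))]
    rcases this with rfl | rfl | rfl | rfl | rfl | rfl
    exacts [ha₁, ha₂, ha₃, hb₁, hb₂, hb₃]
  have hc' : ∀ v ∈ S, c v ≠ 0 := by
    intro v hv
    exact (Finset.mem_filter.mp hv).2
  have hSempty : S = ∅ := key_lemma M hM1 hM S hcard hmon' c hc' hzero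
  have hcount : ∀ v : ℂ[X], A.count v = B.count v := by
    intro v
    have hcv : c v = 0 := by
      by_cases hvT : v ∈ T
      · by_contra hne0
        have : v ∈ S := Finset.mem_filter.mpr ⟨hvT, hne0⟩
        rw [hSempty] at this
        exact absurd this (Finset.notMem_empty v)
      · rw [hT, Multiset.mem_toFinset, Multiset.mem_add] at hvT
        push_neg at hvT
        simp only [hcdef]
        rw [Multiset.count_eq_zero_of_notMem hvT.1,
          Multiset.count_eq_zero_of_notMem hvT.2]
        simp
    simp only [hcdef] at hcv
    rw [sub_eq_zero] at hcv
    exact_mod_cast hcv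
  exact Multiset.ext.mpr hcount

theorem singular_det_of_powers_pairs_off (M : ℕ)
    (hM : ∀ j : ℕ, 2 ≤ j → j ≤ 6 →
      ¬ ∃ g : Fin j → ℂ[X], (∀ i, g i ≠ 0) ∧
        (∀ i i', i ≠ i' → ∀ c : ℂ, g i ≠ c • g i') ∧
        ∑ i, g i ^ M = 0)
    (t₁ t₂ t₃ u₁ u₂ u₃ v₁ v₂ v₃ : ℂ[X])
    (ht₁ : t₁.Monic) (ht₂ : t₂.Monic) (ht₃ : t₃.Monic)
    (hu₁ : u₁.Monic) (hu₂ : u₂.Monic) (hu₃ : u₃.Monic)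
    (hv₁ : v₁.Monic) (hv₂ : v₂.Monic) (hv₃ : v₃.Monic)
    (hdet : (!![t₁ ^ M, t₂ ^ M, t₃ ^ M;
                u₁ ^ M, u₂ ^ M, u₃ ^ M;
                v₁ ^ M, v₂ ^ M, v₃ ^ M]).det = 0) :
    ∃ σ : Equiv.Perm (Fin 3),
      ∀ i : Fin 3,
        (![(t₁ * u₂ * v₃) ^ M, (t₂ * u₃ * v₁) ^ M, (t₃ * u₁ * v₂) ^ M]) i =
        (![(t₃ * u₂ * v₁) ^ M, (t₂ * u₁ * v₃) ^ M, (t₁ * u₃ * v₂) ^ M]) (σ i) := by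
  classical
  rcases Nat.eq_zero_or_pos M with rfl | hM1
  · exact ⟨1, by intro i; fin_cases i <;> simp⟩
  have hsum : (t₁ * u₂ * v₃) ^ M + (t₂ * u₃ * v₁) ^ M + (t₃ * u₁ * v₂) ^ M =
      (t₃ * u₂ * v₁) ^ M + (t₂ * u₁ * v₃) ^ M + (t₁ * u₃ * v₂) ^ M := by
    rw [Matrix.det_fin_three] at hdet
    simp only [Matrix.cons_val', Matrix.cons_val_zero, Matrix.cons_val_one, Matrix.head_cons,
      Matrix.empty_val', Matrix.cons_val_fin_one, Matrix.head_fin_const, Matrix.of_apply,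
      Matrix.cons_val_two, Matrix.tail_cons] at hdet
    simp only [mul_pow]
    linear_combination hdet
  have hAB := multiset_eq_of_sum_eq M hM1 hM _ _ _ _ _ _
    ⟨t₁ * u₂ * v₃, (ht₁.mul hu₂).mul hv₃, rfl⟩
    ⟨t₂ * u₃ * v₁, (ht₂.mul hu₃).mul hv₁, rfl⟩
    ⟨t₃ * u₁ * v₂, (ht₃.mul hu₁).mul hv₂, rfl⟩
    ⟨t₃ * u₂ * v₁, (ht₃.mul hu₂).mul hv₁, rfl⟩
    ⟨t₂ * u₁ * v₃, (ht₂.mul hu₁).mul hv₃, rfl⟩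
    ⟨t₁ * u₃ * v₂, (ht₁.mul hu₃).mul hv₂, rfl⟩
    hsum
  exact perm_of_multiset_eq hAB
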